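/- Let T_1,…,T_n be operators on H with ∑_s T_s T_s* ≤ 1 (a row contraction), and set Δ := 1 − ∑_s T_s T_s*. Suppose Φ^m(1) → 0 strongly, where Φ(X) := ∑_s T_s X T_s*. Then for every h ∈ H, ∑_{α} ‖Δ^{1/2} T_α* h‖² = ‖h‖², where the sum is over all words α in n letters and T_α is the corresponding product. -/

import Mathlib

open ContinuousLinearMap Filter

/-- The product `T_{s₁} ∘ ⋯ ∘ T_{s_p}` associated with a word `α = [s₁,…,s_p]`. -/
noncomputable def listProd {H : Type*} [NormedAddCommGroup H] [InnerProductSpace ℂ H]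
    {n : ℕ} (T : Fin n → H →L[ℂ] H) (α : List (Fin n)) : H →L[ℂ] H :=
  (α.map T).prod

theorem stmt14 {H : Type*} [NormedAddCommGroup H] [InnerProductSpace ℂ H] [CompleteSpace H]
    (n : ℕ) (T : Fin n → H →L[ℂ] H)
    (hrow : ((1 : H →L[ℂ] H) - ∑ s, T s * adjoint (T s)).IsPositive)
    (hpure : ∀ x : H, Tendsto
      (fun m => ((fun X : H →L[ℂ] H => ∑ s, T s * X * adjoint (T s))^[m] 1) x)
      atTop (nhds 0))
    -- R is the positive square root Δ^{1/2} of Δ := 1 - ∑_s T_s T_s*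
    (R : H →L[ℂ] H) (hR : R.IsPositive)
    (hR2 : R * R = 1 - ∑ s, T s * adjoint (T s)) :
    ∀ h : H,
      HasSum (fun α : List (Fin n) => ‖R (adjoint (listProd T α) h)‖ ^ 2) (‖h‖ ^ 2) := by
  classical
  intro h
  set Φ : (H →L[ℂ] H) → (H →L[ℂ] H) := fun X => ∑ s, T s * X * adjoint (T s) with hΦ
  set Δ : H →L[ℂ] H := 1 - ∑ s, T s * adjoint (T s) with hΔ
  set f : List (Fin n) → ℝ := fun α => ‖R (adjoint (listProd T α) h)‖ ^ 2 with hf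
  -- cons formula for listProd
  have hcons : ∀ (s : Fin n) (l : List (Fin n)),
      listProd T (s :: l) = T s * listProd T l := by
    intro s l; simp [listProd]
  -- level sums give iterates of Φ
  have key : ∀ (p : ℕ) (X : H →L[ℂ] H),
      ∑ w : Fin p → Fin n,
        listProd T (List.ofFn w) * X * adjoint (listProd T (List.ofFn w)) = Φ^[p] X := by
    intro p
    induction p with
    | zero => intro X; simp [listProd, ← star_eq_adjoint]
    | succ p ih =>
      intro X
      rw [Function.iterate_succ_apply']
      rw [← (Fin.consEquiv fun _ : Fin (p + 1) => Fin n).sum_comp]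
      rw [Fintype.sum_prod_type]
      have hoffn : ∀ (s : Fin n) (w : Fin p → Fin n),
          List.ofFn (Fin.cons s w : Fin (p + 1) → Fin n) = s :: List.ofFn w := by
        intro s w
        rw [List.ofFn_succ]
        simp [Fin.cons_succ]
      have : ∀ s : Fin n, ∑ w : Fin p → Fin n,
          listProd T (List.ofFn ((Fin.consEquiv fun _ => Fin n) (s, w))) * X *
            adjoint (listProd T (List.ofFn ((Fin.consEquiv fun _ => Fin n) (s, w))))
          = T s * (Φ^[p] X) * adjoint (T s) := by
        intro s
        rw [← ih X, Finset.mul_sum, Finset.sum_mul]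
        refine Finset.sum_congr rfl fun w _ => ?_
        have : (Fin.consEquiv fun _ : Fin (p+1) => Fin n) (s, w) = Fin.cons s w := rfl
        rw [this, hoffn, hcons, ← star_eq_adjoint, star_mul, star_eq_adjoint, star_eq_adjoint]
        simp only [mul_assoc]
      rw [Finset.sum_congr rfl fun s _ => this s]
  -- Φ iterates are additive on subtraction
  have hsub : ∀ (p : ℕ) (X Y : H →L[ℂ] H), Φ^[p] (X - Y) = Φ^[p] X - Φ^[p] Y := by
    intro p
    induction p with
    | zero => intro X Y; simp
    | succ p ih =>
      intro X Y
      rw [Function.iterate_succ_apply, Function.iterate_succ_apply,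
        Function.iterate_succ_apply]
      have : Φ (X - Y) = Φ X - Φ Y := by
        simp [hΦ, mul_sub, sub_mul, Finset.sum_sub_distrib]
      rw [this, ih]
  -- f in terms of inner products
  have hRsa : adjoint R = R := hR.isSelfAdjoint.adjoint_eq
  have hfA : ∀ α : List (Fin n),
      f α = RCLike.re ((inner ℂ h ((listProd T α * Δ * adjoint (listProd T α)) h) : ℂ)) := by
    intro α
    set A := listProd T α
    have h1 : (inner ℂ (adjoint A h) ((R * R) (adjoint A h)) : ℂ)
        = (inner ℂ (R (adjoint A h)) (R (adjoint A h)) : ℂ) := by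
      conv_lhs => rw [ContinuousLinearMap.mul_apply, ← hRsa]
      rw [adjoint_inner_right, hRsa]
    have h2 : (inner ℂ (adjoint A h) (Δ (adjoint A h)) : ℂ)
        = (inner ℂ h ((A * Δ * adjoint A) h) : ℂ) := by
      rw [adjoint_inner_left]
      simp [ContinuousLinearMap.mul_apply]
    rw [hf]
    simp only []
    rw [← inner_self_eq_norm_sq (𝕜 := ℂ), ← h1, hR2, h2]
  -- the sequence g
  set g : ℕ → ℝ := fun p => RCLike.re (inner ℂ h ((Φ^[p] 1) h) : ℂ) with hg
  have hΔΦ : Δ = 1 - Φ 1 := by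
    simp [hΔ, hΦ]
  -- level sums of f
  have hF : ∀ p : ℕ, ∑ w : Fin p → Fin n, f (List.ofFn w) = g p - g (p + 1) := by
    intro p
    have : ∑ w : Fin p → Fin n, f (List.ofFn w)
        = RCLike.re (inner ℂ h ((Φ^[p] Δ) h) : ℂ) := by
      rw [← key p Δ]
      rw [ContinuousLinearMap.sum_apply, inner_sum, map_sum]
      exact Finset.sum_congr rfl fun w _ => hfA _
    rw [this, hΔΦ, hsub p 1 (Φ 1), ← Function.iterate_succ_apply]
    simp [hg, inner_sub_right]
  have hg0 : g 0 = ‖h‖ ^ 2 := by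
    have h0 : g 0 = RCLike.re (inner ℂ h h : ℂ) := by simp [hg]
    rw [h0, inner_self_eq_norm_sq]
  have hgt : Tendsto g atTop (nhds 0) := by
    have := hpure h
    have h2 : Tendsto (fun m => (inner ℂ h ((Φ^[m] 1) h) : ℂ)) atTop (nhds 0) := by
      have h1 := Filter.Tendsto.inner (𝕜 := ℂ) (tendsto_const_nhds (x := h) (f := atTop)) this
      simpa using h1
    have h3 := (RCLike.continuous_re.tendsto (0 : ℂ)).comp h2
    simpa [hg, Function.comp_def] using h3
  -- HasSum of level sums
  have hFnonneg : ∀ p : ℕ, 0 ≤ ∑ w : Fin p → Fin n, f (List.ofFn w) := by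
    intro p
    exact Finset.sum_nonneg fun w _ => by positivity
  have hFsum : HasSum (fun p : ℕ => ∑ w : Fin p → Fin n, f (List.ofFn w)) (‖h‖ ^ 2) := by
    rw [hasSum_iff_tendsto_nat_of_nonneg hFnonneg]
    have heq : ∀ N : ℕ, ∑ i ∈ Finset.range N, ∑ w : Fin i → Fin n, f (List.ofFn w)
        = g 0 - g N := by
      intro N
      rw [Finset.sum_congr rfl fun i _ => hF i]
      exact Finset.sum_range_sub' g N
    simp only [heq]
    rw [← hg0]
    have : Tendsto (fun N => g 0 - g N) atTop (nhds (g 0 - 0)) :=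
      tendsto_const_nhds.sub hgt
    simpa using this
  -- assemble the sigma sum
  have hfib : ∀ p : ℕ, HasSum (fun w : Fin p → Fin n => f (List.ofFn w))
      (∑ w : Fin p → Fin n, f (List.ofFn w)) := fun p => hasSum_fintype _
  have hsummable : Summable (fun q : (p : ℕ) × (Fin p → Fin n) => f (List.ofFn q.2)) := by
    rw [summable_sigma_of_nonneg (fun q => by positivity)]
    constructor
    · intro p; exact (hfib p).summable
    · have : (fun p : ℕ => ∑' w : Fin p → Fin n, f (List.ofFn w))
          = fun p : ℕ => ∑ w : Fin p → Fin n, f (List.ofFn w) := by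
        funext p; exact tsum_fintype _
      rw [this]
      exact hFsum.summable
  have hsigma : HasSum (fun q : (p : ℕ) × (Fin p → Fin n) => f (List.ofFn q.2)) (‖h‖ ^ 2) :=
    HasSum.sigma_of_hasSum hFsum hfib hsummable
  have hequiv := (Equiv.hasSum_iff (f := f) (a := ‖h‖ ^ 2)
    ((List.equivSigmaTuple (α := Fin n)).symm))
  rw [← hequiv]
  have : (f ∘ ⇑(List.equivSigmaTuple (α := Fin n)).symm)
      = fun q : (p : ℕ) × (Fin p → Fin n) => f (List.ofFn q.2) := by
    funext q
    rcases q with ⟨p, w⟩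
    simp [List.equivSigmaTuple]
  rw [this]
  exact hsigma
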